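/- Over F_2, the quadratic forms Q1 + Q3 = x1^2 + x2^2 + x3^2 + x3*x4 + x4^2 + x5*x7 + x6*x8 + x7^2 + x8^2 and Q2 + Q3 = x1^2 + x1*x2 + x2^2 + (x5 + x8)*(x6 + x7) do not simultaneously vanish on any 4-dimensional linear subspace L of F_2^8. -/

import Mathlib

namespace Stmt5Aux

/-- membership predicate for the common zero set of the two quadratic forms,
on 8-bit codes (bitmask lookup) -/
def p (m : ℕ) : Bool :=
  (1884609908876035418192394074413613055872529996998867639782642318150008833 >>> m) &&& 1 == 1

/-- the 51 nonzero codes of common zeros -/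
def zl : List ℕ :=
  [16, 32, 51, 53, 54, 57, 58, 61, 62, 68, 72, 76, 83, 85, 86, 89, 90, 93, 94,
   100, 104, 108, 112, 132, 136, 140, 148, 152, 156, 163, 165, 166, 169, 170,
   173, 174, 176, 195, 197, 198, 201, 202, 205, 206, 212, 216, 220, 228, 232, 236, 240]

def code4 (x0 x1 x2 x3 : ZMod 2) : ℕ :=
  x0.val + 2 * x1.val + 4 * x2.val + 8 * x3.val

def code (v : Fin 8 → ZMod 2) : ℕ :=
  code4 (v 0) (v 1) (v 2) (v 3) + 16 * code4 (v 4) (v 5) (v 6) (v 7)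

lemma add4 : ∀ x0 x1 x2 x3 y0 y1 y2 y3 : ZMod 2,
    code4 (x0 + y0) (x1 + y1) (x2 + y2) (x3 + y3)
      = code4 x0 x1 x2 x3 ^^^ code4 y0 y1 y2 y3 := by decide

lemma lt4 : ∀ x0 x1 x2 x3 : ZMod 2, code4 x0 x1 x2 x3 < 16 := by decide

set_option maxRecDepth 10000 in
lemma comb : ∀ a < 16, ∀ b < 16, ∀ c < 16, ∀ d < 16,
    (a + 16 * c) ^^^ (b + 16 * d) = (a ^^^ b) + 16 * (c ^^^ d) := by decide +kernel

lemma codeAdd (u v : Fin 8 → ZMod 2) : code (u + v) = code u ^^^ code v := by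
  show code4 (u 0 + v 0) (u 1 + v 1) (u 2 + v 2) (u 3 + v 3)
      + 16 * code4 (u 4 + v 4) (u 5 + v 5) (u 6 + v 6) (u 7 + v 7)
    = code u ^^^ code v
  rw [add4, add4]
  exact (comb _ (lt4 _ _ _ _) _ (lt4 _ _ _ _) _ (lt4 _ _ _ _) _ (lt4 _ _ _ _)).symm

lemma pcode : ∀ x0 x1 x2 x3 x4 x5 x6 x7 : ZMod 2,
    (x0 ^ 2 + x1 ^ 2 + x2 ^ 2 + x2 * x3 + x3 ^ 2
        + x4 * x6 + x5 * x7 + x6 ^ 2 + x7 ^ 2 = 0 ∧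
     x0 ^ 2 + x0 * x1 + x1 ^ 2 + (x4 + x7) * (x5 + x6) = 0) →
    p (code4 x0 x1 x2 x3 + 16 * code4 x4 x5 x6 x7) = true := by decide

set_option synthInstance.maxSize 2000 in
lemma nz8 : ∀ x0 x1 x2 x3 x4 x5 x6 x7 : ZMod 2,
    ¬(x0 = 0 ∧ x1 = 0 ∧ x2 = 0 ∧ x3 = 0 ∧ x4 = 0 ∧ x5 = 0 ∧ x6 = 0 ∧ x7 = 0) →
    code4 x0 x1 x2 x3 + 16 * code4 x4 x5 x6 x7 ≠ 0 := by decide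

set_option synthInstance.maxSize 2000 in
lemma mem8 : ∀ x0 x1 x2 x3 x4 x5 x6 x7 : ZMod 2,
    (x0 ^ 2 + x1 ^ 2 + x2 ^ 2 + x2 * x3 + x3 ^ 2
        + x4 * x6 + x5 * x7 + x6 ^ 2 + x7 ^ 2 = 0 ∧
     x0 ^ 2 + x0 * x1 + x1 ^ 2 + (x4 + x7) * (x5 + x6) = 0) →
    ¬(x0 = 0 ∧ x1 = 0 ∧ x2 = 0 ∧ x3 = 0 ∧ x4 = 0 ∧ x5 = 0 ∧ x6 = 0 ∧ x7 = 0) →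
    (code4 x0 x1 x2 x3 + 16 * code4 x4 x5 x6 x7) ∈ zl := by decide

/-- exhaustive search: no 4 independent codes with span inside the zero set -/
def chk : Bool := zl.all fun a => zl.all fun b =>
  !(decide (a < b) && p (a ^^^ b)) || zl.all fun c =>
    !(p (a ^^^ c) && p (b ^^^ c) && p (a ^^^ b ^^^ c)
      && decide (a ^^^ c ≠ 0) && decide (b ^^^ c ≠ 0)
      && decide (a ^^^ b ^^^ c ≠ 0)) || zl.all fun d =>
      !(decide (c < d) && p (a ^^^ d) && p (b ^^^ d) && p (c ^^^ d)
        && p (a ^^^ b ^^^ d) && p (a ^^^ c ^^^ d) && p (b ^^^ c ^^^ d)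
        && p (a ^^^ b ^^^ c ^^^ d)
        && decide (a ^^^ d ≠ 0) && decide (b ^^^ d ≠ 0)
        && decide (a ^^^ b ^^^ d ≠ 0) && decide (a ^^^ c ^^^ d ≠ 0)
        && decide (b ^^^ c ^^^ d ≠ 0) && decide (a ^^^ b ^^^ c ^^^ d ≠ 0))

set_option maxRecDepth 100000 in
lemma chk_true : chk = true := by decide +kernel

lemma key : ∀ a ∈ zl, ∀ b ∈ zl, a < b → p (a ^^^ b) = true →
    ∀ c ∈ zl, a ^^^ c ≠ 0 → b ^^^ c ≠ 0 → a ^^^ b ^^^ c ≠ 0 →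
      p (a ^^^ c) = true → p (b ^^^ c) = true → p (a ^^^ b ^^^ c) = true →
    ∀ d ∈ zl, c < d → a ^^^ d ≠ 0 → b ^^^ d ≠ 0 →
      a ^^^ b ^^^ d ≠ 0 → a ^^^ c ^^^ d ≠ 0 → b ^^^ c ^^^ d ≠ 0 →
      a ^^^ b ^^^ c ^^^ d ≠ 0 →
      p (a ^^^ d) = true → p (b ^^^ d) = true → p (c ^^^ d) = true →
      p (a ^^^ b ^^^ d) = true → p (a ^^^ c ^^^ d) = true →
      p (b ^^^ c ^^^ d) = true → p (a ^^^ b ^^^ c ^^^ d) = true → False := by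
  intro a ha b hb hab hpab c hc hc1 hc2 hc3 hpc1 hpc2 hpc3
    d hd hcd hd1 hd2 hd3 hd4 hd5 hd6 hpd1 hpd2 hpd3 hpd4 hpd5 hpd6 hpd7
  have H1 := List.all_eq_true.mp chk_true a ha
  have H2 := List.all_eq_true.mp H1 b hb
  rw [decide_eq_true hab, hpab] at H2
  simp only [Bool.and_true, Bool.not_true, Bool.false_or] at H2
  have H3 := List.all_eq_true.mp H2 c hc
  rw [hpc1, hpc2, hpc3, decide_eq_true hc1, decide_eq_true hc2, decide_eq_true hc3] at H3
  simp only [Bool.and_true, Bool.true_and, Bool.not_true, Bool.false_or] at H3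
  have H4 := List.all_eq_true.mp H3 d hd
  rw [decide_eq_true hcd, hpd1, hpd2, hpd3, hpd4, hpd5, hpd6, hpd7,
    decide_eq_true hd1, decide_eq_true hd2, decide_eq_true hd3,
    decide_eq_true hd4, decide_eq_true hd5, decide_eq_true hd6] at H4
  simp at H4

lemma hcz (v : Fin 8 → ZMod 2) (hv : v ≠ 0) :
    ¬(v 0 = 0 ∧ v 1 = 0 ∧ v 2 = 0 ∧ v 3 = 0 ∧ v 4 = 0 ∧ v 5 = 0 ∧ v 6 = 0 ∧ v 7 = 0) := by
  rintro ⟨h0, h1, h2, h3, h4, h5, h6, h7⟩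
  apply hv
  funext i
  fin_cases i <;> assumption

end Stmt5Aux

open Stmt5Aux in
/-- Over `𝔽₂`, the forms `Q1 + Q3` and `Q2 + Q3` do not simultaneously
vanish on any 4-dimensional linear subspace of `𝔽₂⁸`. -/
theorem stmt5 (L : Submodule (ZMod 2) (Fin 8 → ZMod 2))
    (hL : Module.finrank (ZMod 2) L = 4) :
    ¬ (∀ v : Fin 8 → ZMod 2, v ∈ L →
      v 0 ^ 2 + v 1 ^ 2 + v 2 ^ 2 + v 2 * v 3 + v 3 ^ 2
        + v 4 * v 6 + v 5 * v 7 + v 6 ^ 2 + v 7 ^ 2 = 0 ∧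
      v 0 ^ 2 + v 0 * v 1 + v 1 ^ 2 + (v 4 + v 7) * (v 5 + v 6) = 0) := by
  intro hvan
  classical
  -- basic helpers
  have pc : ∀ v : Fin 8 → ZMod 2, v ∈ L → p (code v) = true := by
    intro v hv
    exact pcode (v 0) (v 1) (v 2) (v 3) (v 4) (v 5) (v 6) (v 7) (hvan v hv)
  have nz : ∀ v : Fin 8 → ZMod 2, v ≠ 0 → code v ≠ 0 := by
    intro v hv
    exact nz8 (v 0) (v 1) (v 2) (v 3) (v 4) (v 5) (v 6) (v 7) (hcz v hv)
  have mem : ∀ v : Fin 8 → ZMod 2, v ∈ L → v ≠ 0 → code v ∈ zl := by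
    intro v hv hnz
    exact mem8 (v 0) (v 1) (v 2) (v 3) (v 4) (v 5) (v 6) (v 7) (hvan v hv) (hcz v hnz)
  -- main lemma for an ordered independent quadruple
  have main : ∀ x y z t : Fin 8 → ZMod 2, x ∈ L → y ∈ L → z ∈ L → t ∈ L →
      (∀ g : Fin 4 → ZMod 2, g ≠ 0 → g 0 • x + g 1 • y + g 2 • z + g 3 • t ≠ 0) →
      code x < code y → code z < code t → False := by
    intro x y z t hx hy hz ht hne hlt1 hlt2
    have n0 : x ≠ 0 := by simpa using hne ![1,0,0,0] (by decide)
    have n1 : y ≠ 0 := by simpa using hne ![0,1,0,0] (by decide)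
    have n2 : z ≠ 0 := by simpa using hne ![0,0,1,0] (by decide)
    have n3 : t ≠ 0 := by simpa using hne ![0,0,0,1] (by decide)
    have n01 : x + y ≠ 0 := by simpa using hne ![1,1,0,0] (by decide)
    have n02 : x + z ≠ 0 := by simpa using hne ![1,0,1,0] (by decide)
    have n12 : y + z ≠ 0 := by simpa [add_assoc] using hne ![0,1,1,0] (by decide)
    have n012 : x + y + z ≠ 0 := by simpa [add_assoc] using hne ![1,1,1,0] (by decide)
    have n03 : x + t ≠ 0 := by simpa using hne ![1,0,0,1] (by decide)
    have n13 : y + t ≠ 0 := by simpa [add_assoc] using hne ![0,1,0,1] (by decide)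
    have n013 : x + y + t ≠ 0 := by simpa [add_assoc] using hne ![1,1,0,1] (by decide)
    have n023 : x + z + t ≠ 0 := by simpa [add_assoc] using hne ![1,0,1,1] (by decide)
    have n123 : y + z + t ≠ 0 := by simpa [add_assoc] using hne ![0,1,1,1] (by decide)
    have n0123 : x + y + z + t ≠ 0 := by
      simpa [add_assoc] using hne ![1,1,1,1] (by decide)
    have m01 : x + y ∈ L := L.add_mem hx hy
    have m02 : x + z ∈ L := L.add_mem hx hz
    have m12 : y + z ∈ L := L.add_mem hy hz
    have m012 : x + y + z ∈ L := L.add_mem m01 hz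
    have m03 : x + t ∈ L := L.add_mem hx ht
    have m13 : y + t ∈ L := L.add_mem hy ht
    have m23 : z + t ∈ L := L.add_mem hz ht
    have m013 : x + y + t ∈ L := L.add_mem m01 ht
    have m023 : x + z + t ∈ L := L.add_mem m02 ht
    have m123 : y + z + t ∈ L := L.add_mem m12 ht
    have m0123 : x + y + z + t ∈ L := L.add_mem m012 ht
    exact key (code x) (mem _ hx n0) (code y) (mem _ hy n1) hlt1
      (by rw [← codeAdd]; exact pc _ m01)
      (code z) (mem _ hz n2)
      (by rw [← codeAdd]; exact nz _ n02)
      (by rw [← codeAdd]; exact nz _ n12)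
      (by rw [← codeAdd, ← codeAdd]; exact nz _ n012)
      (by rw [← codeAdd]; exact pc _ m02)
      (by rw [← codeAdd]; exact pc _ m12)
      (by rw [← codeAdd, ← codeAdd]; exact pc _ m012)
      (code t) (mem _ ht n3) hlt2
      (by rw [← codeAdd]; exact nz _ n03)
      (by rw [← codeAdd]; exact nz _ n13)
      (by rw [← codeAdd, ← codeAdd]; exact nz _ n013)
      (by rw [← codeAdd, ← codeAdd]; exact nz _ n023)
      (by rw [← codeAdd, ← codeAdd]; exact nz _ n123)
      (by rw [← codeAdd, ← codeAdd, ← codeAdd]; exact nz _ n0123)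
      (by rw [← codeAdd]; exact pc _ m03)
      (by rw [← codeAdd]; exact pc _ m13)
      (by rw [← codeAdd]; exact pc _ m23)
      (by rw [← codeAdd, ← codeAdd]; exact pc _ m013)
      (by rw [← codeAdd, ← codeAdd]; exact pc _ m023)
      (by rw [← codeAdd, ← codeAdd]; exact pc _ m123)
      (by rw [← codeAdd, ← codeAdd, ← codeAdd]; exact pc _ m0123)
  -- get a basis of L and push it to the ambient space
  let B : Module.Basis (Fin 4) (ZMod 2) L := Module.finBasisOfFinrankEq (ZMod 2) L hL
  set w : Fin 4 → (Fin 8 → ZMod 2) := fun i => (B i : Fin 8 → ZMod 2) with hwdef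
  have hw : ∀ i, w i ∈ L := fun i => (B i).2
  have hli : LinearIndependent (ZMod 2) w := by
    have := B.linearIndependent.map' L.subtype (Submodule.ker_subtype L)
    exact this
  have hind := Fintype.linearIndependent_iff.mp hli
  have hne : ∀ g : Fin 4 → ZMod 2, g ≠ 0 →
      g 0 • w 0 + g 1 • w 1 + g 2 • w 2 + g 3 • w 3 ≠ 0 := by
    intro g hg h
    apply hg
    funext i
    exact hind g (by rw [Fin.sum_univ_four]; exact h) i
  -- permuted versions of `hne`
  have hneA : ∀ g : Fin 4 → ZMod 2, g ≠ 0 →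
      g 0 • w 1 + g 1 • w 0 + g 2 • w 2 + g 3 • w 3 ≠ 0 := by
    intro g hg
    have h' : (![g 1, g 0, g 2, g 3] : Fin 4 → ZMod 2) ≠ 0 := by
      intro h
      apply hg
      funext i
      have h0 := congrFun h 0; have h1 := congrFun h 1
      have h2 := congrFun h 2; have h3 := congrFun h 3
      simp at h0 h1 h2 h3
      fin_cases i <;> assumption
    have := hne ![g 1, g 0, g 2, g 3] h'
    simp only [Matrix.cons_val_zero, Matrix.cons_val_one, Matrix.head_cons,
      Matrix.cons_val_two, Matrix.tail_cons, Matrix.cons_val_three] at this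
    rwa [add_comm (g 1 • w 0) (g 0 • w 1)] at this
  have hneB : ∀ g : Fin 4 → ZMod 2, g ≠ 0 →
      g 0 • w 0 + g 1 • w 1 + g 2 • w 3 + g 3 • w 2 ≠ 0 := by
    intro g hg
    have h' : (![g 0, g 1, g 3, g 2] : Fin 4 → ZMod 2) ≠ 0 := by
      intro h
      apply hg
      funext i
      have h0 := congrFun h 0; have h1 := congrFun h 1
      have h2 := congrFun h 2; have h3 := congrFun h 3
      simp at h0 h1 h2 h3
      fin_cases i <;> assumption
    have := hne ![g 0, g 1, g 3, g 2] h'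
    simp only [Matrix.cons_val_zero, Matrix.cons_val_one, Matrix.head_cons,
      Matrix.cons_val_two, Matrix.tail_cons, Matrix.cons_val_three] at this
    rwa [add_right_comm (g 0 • w 0 + g 1 • w 1) (g 3 • w 2) (g 2 • w 3)] at this
  have hneAB : ∀ g : Fin 4 → ZMod 2, g ≠ 0 →
      g 0 • w 1 + g 1 • w 0 + g 2 • w 3 + g 3 • w 2 ≠ 0 := by
    intro g hg
    have h' : (![g 1, g 0, g 2, g 3] : Fin 4 → ZMod 2) ≠ 0 := by
      intro h
      apply hg
      funext i
      have h0 := congrFun h 0; have h1 := congrFun h 1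
      have h2 := congrFun h 2; have h3 := congrFun h 3
      simp at h0 h1 h2 h3
      fin_cases i <;> assumption
    have := hneB ![g 1, g 0, g 2, g 3] h'
    simp only [Matrix.cons_val_zero, Matrix.cons_val_one, Matrix.head_cons,
      Matrix.cons_val_two, Matrix.tail_cons, Matrix.cons_val_three] at this
    rwa [add_comm (g 1 • w 0) (g 0 • w 1)] at this
  -- distinct codes
  have nz' : ∀ v : Fin 8 → ZMod 2, v ≠ 0 → code v ≠ 0 := by
    intro v hv
    exact nz8 (v 0) (v 1) (v 2) (v 3) (v 4) (v 5) (v 6) (v 7) (hcz v hv)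
  have hcc : ∀ u v : Fin 8 → ZMod 2, u + v ≠ 0 → code u ≠ code v := by
    intro u v h hcode
    apply nz' _ h
    rw [codeAdd, hcode, Nat.xor_self]
  have n01' : w 0 + w 1 ≠ 0 := by simpa using hne ![1,1,0,0] (by decide)
  have n23' : w 2 + w 3 ≠ 0 := by simpa [add_assoc] using hne ![0,0,1,1] (by decide)
  have d01 := hcc _ _ n01'
  have d23 := hcc _ _ n23'
  rcases lt_or_gt_of_ne d01 with h1 | h1 <;> rcases lt_or_gt_of_ne d23 with h2 | h2
  · exact main (w 0) (w 1) (w 2) (w 3) (hw 0) (hw 1) (hw 2) (hw 3) hne h1 h2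
  · exact main (w 0) (w 1) (w 3) (w 2) (hw 0) (hw 1) (hw 3) (hw 2) hneB h1 h2
  · exact main (w 1) (w 0) (w 2) (w 3) (hw 1) (hw 0) (hw 2) (hw 3) hneA h1 h2
  · exact main (w 1) (w 0) (w 3) (w 2) (hw 1) (hw 0) (hw 3) (hw 2) hneAB h1 h2
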